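/- Let 0 < p ≤ 1 and a(n) = 1/(n (log n)^p) for n ≥ 2. Then the partial sums satisfy Σ_{i=2}^{n−1} a(i) ≤ (1/(1−p)) (log n)^{1−p} when p < 1 (and ≤ log log n + constant when p = 1), and for any constant K̃ > 0 the series Σ_{n=2}^{∞} a(n)^2 · (Σ_{i=2}^{n−1} a(i))^2 · exp(2K̃ Σ_{i=2}^{n−1} a(i)) converges. -/

import Mathlib

open Real Finset

/-- tangent line / AM-GM: `t^q ≤ q t + (1-q)` for `t ≥ 0`, `0 ≤ q ≤ 1`. -/
lemma aux_tangent {t q : ℝ} (ht : 0 ≤ t) (hq0 : 0 ≤ q) (hq1 : q ≤ 1) :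
    t ^ q ≤ q * t + (1 - q) := by
  have h := Real.geom_mean_le_arith_mean2_weighted (w₁ := q) (w₂ := 1 - q) (p₁ := t)
    (p₂ := 1) hq0 (by linarith) ht zero_le_one (by ring)
  rw [Real.one_rpow, mul_one, mul_one] at h
  exact h

lemma aux_gap {x : ℝ} (hx : 2 ≤ x) : 1 / (x + 1) ≤ Real.log (x + 1) - Real.log x := by
  have hx0 : 0 < x := by linarith
  have hx1 : 0 < x + 1 := by linarith
  have h := Real.one_sub_inv_le_log_of_pos (x := (x+1)/x) (by positivity)
  rw [Real.log_div (by positivity) (by positivity)] at h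
  have h1 : ((x+1)/x)⁻¹ = x/(x+1) := by field_simp
  rw [h1] at h
  have h2 : 1 - x/(x+1) = 1/(x+1) := by field_simp; ring
  linarith [h2 ▸ h]

/-- key step for p<1 -/
lemma aux_keyB {p : ℝ} (hp0 : 0 < p) (hp1 : p < 1) {x : ℝ} (hx : 2 ≤ x) :
    1 / ((x + 1) * Real.log (x + 1) ^ p) ≤
      (1 / (1 - p)) * Real.log (x + 1) ^ (1 - p)
        - (1 / (1 - p)) * Real.log x ^ (1 - p) := by
  set q := 1 - p with hqdef
  have hq0 : 0 < q := by simp only [hqdef]; linarith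
  have hq1 : q ≤ 1 := by simp only [hqdef]; linarith
  have hL : 0 < Real.log x := Real.log_pos (by linarith)
  have hM : 0 < Real.log (x + 1) := Real.log_pos (by linarith)
  have hLM : Real.log x < Real.log (x+1) := Real.log_lt_log (by linarith) (by linarith)
  set L := Real.log x
  set M := Real.log (x+1)
  have hMq : 0 < M ^ q := Real.rpow_pos_of_pos hM q
  have hMp : 0 < M ^ p := Real.rpow_pos_of_pos hM p
  have hLq : 0 < L ^ q := Real.rpow_pos_of_pos hL q
  have hMqp : M ^ q * M ^ p = M := by
    rw [← Real.rpow_add hM]; simp [hqdef]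
  have ht := aux_tangent (t := L / M) (by positivity) hq0.le hq1
  rw [Real.div_rpow hL.le hM.le, div_le_iff₀ hMq] at ht
  have hgap := aux_gap hx
  have hx1 : (0:ℝ) < x + 1 := by linarith
  have key : q * (M - L) / M * M ^ q ≤ M ^ q - L ^ q := by
    have heq : (q * (L / M) + (1 - q)) * M ^ q = M ^ q - q * (M - L) / M * M ^ q := by
      field_simp; ring
    linarith [heq ▸ ht]
  have hfrac : M ^ q / M = (M ^ p)⁻¹ := by
    field_simp
    linarith [hMqp]
  have step1 : q * (1/(x+1)) / M * M ^ q ≤ q * (M - L) / M * M ^ q := by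
    gcongr
  have step2 : q * (1/(x+1)) / M * M ^ q = q * (1/((x+1) * M ^ p)) := by
    calc q * (1/(x+1)) / M * M ^ q = q * (1/(x+1)) * (M ^ q / M) := by ring
    _ = q * (1/(x+1)) * (M ^ p)⁻¹ := by rw [hfrac]
    _ = q * (1/((x+1) * M ^ p)) := by rw [one_div, one_div, mul_inv]; ring
  have hZ := (step2 ▸ step1).trans key
  have h3 : 1/((x+1) * M ^ p) ≤ (M ^ q - L ^ q)/q := by
    rw [le_div_iff₀ hq0]; linarith
  have h4 : (M ^ q - L ^ q)/q = 1/q * M ^ q - 1/q * L ^ q := by ring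
  linarith

/-- key step for p = 1 -/
lemma aux_keyC {x : ℝ} (hx : 2 ≤ x) :
    1 / ((x + 1) * Real.log (x + 1)) ≤
      Real.log (Real.log (x + 1)) - Real.log (Real.log x) := by
  have hL : 0 < Real.log x := Real.log_pos (by linarith)
  have hM : 0 < Real.log (x + 1) := Real.log_pos (by linarith)
  have hLM : Real.log x < Real.log (x+1) := Real.log_lt_log (by linarith) (by linarith)
  set L := Real.log x
  set M := Real.log (x+1)
  have h := Real.one_sub_inv_le_log_of_pos (x := M/L) (by positivity)
  rw [Real.log_div hM.ne' hL.ne'] at h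
  have h1 : (M/L)⁻¹ = L/M := by field_simp
  rw [h1] at h
  have hgap := aux_gap hx
  have hx1 : (0:ℝ) < x + 1 := by linarith
  have hgap1 : 1 ≤ (M - L) * (x+1) := (div_le_iff₀ hx1).mp hgap
  have h2 : 1/((x+1)*M) ≤ 1 - L/M := by
    have e : 1 - L/M = (M - L)/M := by field_simp
    rw [e, div_le_div_iff₀ (by positivity) hM]
    nlinarith
  linarith

lemma aux_sumB (p : ℝ) (hp0 : 0 < p) (hp1 : p < 1)
    (a : ℕ → ℝ) (ha : ∀ n, a n = 1 / ((n : ℝ) * Real.log n ^ p)) :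
    ∀ n : ℕ, 2 ≤ n →
      ∑ i ∈ Finset.Ico 2 n, a i ≤ (1 / (1 - p)) * Real.log n ^ (1 - p) := by
  set q := 1 - p with hqdef
  have hq0 : 0 < q := by simp only [hqdef]; linarith
  have hq1 : q ≤ 1 := by simp only [hqdef]; linarith
  have hl2 : (0.6931471803 : ℝ) < Real.log 2 := Real.log_two_gt_d9
  have h2q : (0:ℝ) < Real.log 2 ^ q := Real.rpow_pos_of_pos (by linarith) q
  have h2p : (0:ℝ) < Real.log 2 ^ p := Real.rpow_pos_of_pos (by linarith) p
  have h2pq : Real.log 2 ^ p * Real.log 2 ^ q = Real.log 2 := by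
    rw [← Real.rpow_add (by linarith)]; simp [hqdef]
  have hq' : (1:ℝ) ≤ 1/q := by rw [le_div_iff₀ hq0]; linarith
  -- the core induction, for n ≥ 3
  have main : ∀ n : ℕ, 3 ≤ n → ∑ i ∈ Finset.Ico 2 n, a i ≤
      a 2 + (1/q) * Real.log ((n:ℝ)-1) ^ q - (1/q) * Real.log 2 ^ q := by
    intro n hn
    induction n, hn using Nat.le_induction with
    | base =>
      rw [Finset.sum_Ico_succ_top (le_refl 2), Finset.Ico_self, Finset.sum_empty, zero_add]
      have hc : ((3:ℕ):ℝ) - 1 = 2 := by norm_num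
      rw [hc]
      linarith
    | succ n hn ih =>
      rw [Finset.sum_Ico_succ_top (by omega)]
      have hx : (2:ℝ) ≤ (n:ℝ) - 1 := by
        have : (3:ℝ) ≤ (n:ℝ) := by exact_mod_cast hn
        linarith
      have hkey := aux_keyB hp0 hp1 hx
      rw [show ((n:ℝ) - 1) + 1 = (n:ℝ) by ring, ← hqdef] at hkey
      have hcast : ((n+1:ℕ):ℝ) - 1 = (n:ℝ) := by push_cast; ring
      rw [hcast]
      have han := ha n
      linarith
  intro n hn
  rcases eq_or_lt_of_le hn with h | h
  · rw [← h, Finset.Ico_self, Finset.sum_empty]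
    have : (0:ℝ) < 1/q * Real.log ((2:ℕ):ℝ) ^ q := by
      push_cast
      exact mul_pos (by positivity) h2q
    linarith
  · have hn3 : 3 ≤ n := h
    have h1 := main n hn3
    have hn3' : (3:ℝ) ≤ (n:ℝ) := by exact_mod_cast hn3
    have ha2 : a 2 ≤ (1/q) * Real.log 2 ^ q := by
      rw [ha 2]
      push_cast
      rw [div_le_iff₀ (by positivity)]
      have e : 1/q * Real.log 2 ^ q * (2 * Real.log 2 ^ p) = 1/q * (2*Real.log 2) := by
        linear_combination (2/q) * h2pq
      rw [e]
      nlinarith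
    have hmono : Real.log ((n:ℝ)-1) ^ q ≤ Real.log (n:ℝ) ^ q :=
      Real.rpow_le_rpow (Real.log_nonneg (by linarith))
        (Real.log_le_log (by linarith) (by linarith)) hq0.le
    have := mul_le_mul_of_nonneg_left hmono (by positivity : (0:ℝ) ≤ 1/q)
    linarith

lemma aux_sumC (a : ℕ → ℝ) (ha : ∀ n, a n = 1 / ((n : ℝ) * Real.log n)) :
    ∀ n : ℕ, 3 ≤ n → ∑ i ∈ Finset.Ico 2 n, a i ≤
      Real.log (Real.log n) + (a 2 - Real.log (Real.log 2)) := by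
  have main : ∀ n : ℕ, 3 ≤ n → ∑ i ∈ Finset.Ico 2 n, a i ≤
      Real.log (Real.log ((n:ℝ)-1)) + (a 2 - Real.log (Real.log 2)) := by
    intro n hn
    induction n, hn using Nat.le_induction with
    | base =>
      rw [Finset.sum_Ico_succ_top (le_refl 2), Finset.Ico_self, Finset.sum_empty, zero_add]
      have hc : ((3:ℕ):ℝ) - 1 = 2 := by norm_num
      rw [hc]
      linarith
    | succ n hn ih =>
      rw [Finset.sum_Ico_succ_top (by omega)]
      have hx : (2:ℝ) ≤ (n:ℝ) - 1 := by
        have : (3:ℝ) ≤ (n:ℝ) := by exact_mod_cast hn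
        linarith
      have hkey := aux_keyC hx
      rw [show ((n:ℝ) - 1) + 1 = (n:ℝ) by ring] at hkey
      have hcast : ((n+1:ℕ):ℝ) - 1 = (n:ℝ) := by push_cast; ring
      rw [hcast]
      have han := ha n
      linarith
  intro n hn
  have h1 := main n hn
  have hn3' : (3:ℝ) ≤ (n:ℝ) := by exact_mod_cast hn
  have hmono : Real.log (Real.log ((n:ℝ)-1)) ≤ Real.log (Real.log (n:ℝ)) :=
    Real.log_le_log (Real.log_pos (by linarith))
      (Real.log_le_log (by linarith) (by linarith))
  linarith

lemma aux_summable (p : ℝ) (hp0 : 0 < p) (hp1 : p ≤ 1)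
    (a : ℕ → ℝ) (ha : ∀ n, a n = 1 / ((n : ℝ) * Real.log n ^ p))
    (K : ℝ) (hK : 0 < K) :
    Summable (fun n : ℕ => a n ^ 2 * (∑ i ∈ Finset.Ico 2 n, a i) ^ 2 *
      Real.exp (2 * K * ∑ i ∈ Finset.Ico 2 n, a i)) := by
  set S : ℕ → ℝ := fun n => ∑ i ∈ Finset.Ico 2 n, a i with hSdef
  have hl2 : (0.6931471803 : ℝ) < Real.log 2 := Real.log_two_gt_d9
  have hl2' : Real.log 2 < 1 := by
    linarith [Real.log_two_lt_d9]
  have hlogn : ∀ n : ℕ, 0 ≤ Real.log n := by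
    intro n
    rcases Nat.eq_zero_or_pos n with h | h
    · simp [h]
    · exact Real.log_nonneg (by exact_mod_cast h)
  have haN : ∀ n, 0 ≤ a n := by
    intro n
    rw [ha n]
    exact one_div_nonneg.mpr (mul_nonneg (Nat.cast_nonneg n)
      (Real.rpow_nonneg (hlogn n) p))
  have hS0 : ∀ n, 0 ≤ S n := fun n => Finset.sum_nonneg fun i _ => haN i
  set K' : ℝ := K + 1 with hK'def
  have hK' : 0 < K' := by simp only [hK'def]; linarith
  -- pointwise comparison with a n ^ 2 * exp (2 K' S n)
  have hTle : ∀ n, a n ^ 2 * S n ^ 2 * Real.exp (2 * K * S n) ≤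
      a n ^ 2 * Real.exp (2 * K' * S n) := by
    intro n
    have h1 : S n ≤ Real.exp (S n) := by linarith [Real.add_one_le_exp (S n)]
    have h2 : S n ^ 2 ≤ Real.exp (S n) ^ 2 := pow_le_pow_left₀ (hS0 n) h1 2
    have h3 : Real.exp (S n) ^ 2 = Real.exp (2 * S n) := by
      rw [sq, ← Real.exp_add]; ring_nf
    have h4 : Real.exp (2 * S n) * Real.exp (2 * K * S n) = Real.exp (2 * K' * S n) := by
      rw [← Real.exp_add, hK'def]; ring_nf
    calc a n ^ 2 * S n ^ 2 * Real.exp (2 * K * S n)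
        ≤ a n ^ 2 * Real.exp (2 * S n) * Real.exp (2 * K * S n) := by
          apply mul_le_mul_of_nonneg_right _ (Real.exp_nonneg _)
          rw [h3] at h2
          exact mul_le_mul_of_nonneg_left h2 (by positivity)
      _ = a n ^ 2 * Real.exp (2 * K' * S n) := by rw [mul_assoc, h4]
  -- exponential growth bound
  have hexp : ∃ C : ℝ, 0 ≤ C ∧ ∀ n : ℕ, 3 ≤ n →
      Real.exp (2 * K' * S n) ≤ C * (n:ℝ) ^ (1/2 : ℝ) := by
    rcases lt_or_eq_of_le hp1 with hplt | hpeq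
    · -- case p < 1
      set q : ℝ := 1 - p with hqdef
      have hq0 : 0 < q := by simp only [hqdef]; linarith
      have hq1 : q ≤ 1 := by simp only [hqdef]; linarith
      obtain ⟨A, hA, hAp⟩ : ∃ A : ℝ, 0 < A ∧ A ^ p = 4 * K' := by
        refine ⟨(4 * K') ^ (p⁻¹ : ℝ), Real.rpow_pos_of_pos (by linarith) _, ?_⟩
        rw [← Real.rpow_mul (by linarith), inv_mul_cancel₀ hp0.ne', Real.rpow_one]
      have hAq : 0 < A ^ q := Real.rpow_pos_of_pos hA q
      refine ⟨Real.exp (2 * K' / q * ((1 - q) * A ^ q)), Real.exp_nonneg _, ?_⟩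
      intro n hn
      have hn1 : (1:ℝ) < (n:ℝ) := by
        have : (3:ℝ) ≤ (n:ℝ) := by exact_mod_cast hn
        linarith
      have hln : 0 ≤ Real.log n := hlogn n
      -- tangent bound for (log n)^q
      have ht := aux_tangent (t := Real.log n / A) (by positivity) hq0.le hq1
      rw [Real.div_rpow hln hA.le, div_le_iff₀ hAq] at ht
      have hAqA : A ^ q * A ^ p = A := by
        rw [← Real.rpow_add hA]; simp [hqdef]
      have hA4 : A ^ q * (4 * K') = A := by rw [← hAp]; exact hAqA
      have hfrac : A ^ q / A = (4 * K')⁻¹ := by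
        have hAne : A ≠ 0 := hA.ne'
        have h4ne : (4 * K') ≠ 0 := by positivity
        field_simp
        linear_combination hA4
      have heq1 : (q * (Real.log n / A) + (1 - q)) * A ^ q
          = q * (4 * K')⁻¹ * Real.log n + (1 - q) * A ^ q := by
        calc (q * (Real.log n / A) + (1 - q)) * A ^ q
            = q * Real.log n * (A ^ q / A) + (1 - q) * A ^ q := by ring
          _ = q * (4 * K')⁻¹ * Real.log n + (1 - q) * A ^ q := by rw [hfrac]; ring
      rw [heq1] at ht
      -- ht : (log n)^q ≤ q * (4K')⁻¹ * log n + (1-q) * A^q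
      have hSb : S n ≤ (1 / q) * Real.log n ^ q := aux_sumB p hp0 hplt a ha n (by omega)
      have hexp1 : 2 * K' * S n ≤ (1/2) * Real.log n + 2 * K' / q * ((1 - q) * A ^ q) := by
        have h5 : 2 * K' * S n ≤ 2 * K' * ((1 / q) * Real.log n ^ q) := by
          apply mul_le_mul_of_nonneg_left hSb (by positivity)
        have h6 : 2 * K' * ((1/q) * (q * (4 * K')⁻¹ * Real.log n + (1 - q) * A ^ q))
            = (1/2) * Real.log n + 2 * K' / q * ((1 - q) * A ^ q) := by
          field_simp
          ring
        have h7 : 2 * K' * ((1/q) * Real.log n ^ q) ≤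
            2 * K' * ((1/q) * (q * (4 * K')⁻¹ * Real.log n + (1 - q) * A ^ q)) := by
          apply mul_le_mul_of_nonneg_left _ (by positivity)
          apply mul_le_mul_of_nonneg_left ht (by positivity)
        linarith
      calc Real.exp (2 * K' * S n) ≤
          Real.exp ((1/2) * Real.log n + 2 * K' / q * ((1 - q) * A ^ q)) :=
            Real.exp_le_exp.mpr hexp1
        _ = Real.exp (2 * K' / q * ((1 - q) * A ^ q)) * (n:ℝ) ^ (1/2 : ℝ) := by
            rw [Real.exp_add, Real.rpow_def_of_pos (by linarith : (0:ℝ) < (n:ℝ))]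
            ring_nf
    · -- case p = 1
      have ha' : ∀ n, a n = 1 / ((n : ℝ) * Real.log n) := by
        intro n; rw [ha n, hpeq, Real.rpow_one]
      set c : ℝ := a 2 - Real.log (Real.log 2) with hcdef
      set ε : ℝ := (4 * K')⁻¹ with hεdef
      have hε : 0 < ε := by positivity
      refine ⟨Real.exp (2 * K' * c) * (ε ^ (2 * K' : ℝ))⁻¹, by positivity, ?_⟩
      intro n hn
      have hn3 : (3:ℝ) ≤ (n:ℝ) := by exact_mod_cast hn
      have hlnpos : 0 < Real.log n := Real.log_pos (by linarith)
      have hSb : S n ≤ Real.log (Real.log n) + c := aux_sumC a ha' n hn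
      have h1 : Real.exp (2 * K' * S n) ≤
          Real.exp (2 * K' * c) * Real.log n ^ (2 * K' : ℝ) := by
        rw [Real.rpow_def_of_pos hlnpos, ← Real.exp_add]
        apply Real.exp_le_exp.mpr
        nlinarith [mul_le_mul_of_nonneg_left hSb (by positivity : (0:ℝ) ≤ 2 * K')]
      have h2 : Real.log n ≤ (n:ℝ) ^ ε / ε :=
        Real.log_le_rpow_div (Nat.cast_nonneg n) hε
      have h3 : Real.log n ^ (2 * K' : ℝ) ≤ ((n:ℝ) ^ ε / ε) ^ (2 * K' : ℝ) :=
        Real.rpow_le_rpow hlnpos.le h2 (by positivity)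
      have h4 : ((n:ℝ) ^ ε / ε) ^ (2 * K' : ℝ)
          = (n:ℝ) ^ (1/2 : ℝ) * (ε ^ (2 * K' : ℝ))⁻¹ := by
        rw [Real.div_rpow (Real.rpow_nonneg (Nat.cast_nonneg n) ε) hε.le,
          ← Real.rpow_mul (Nat.cast_nonneg n)]
        rw [show ε * (2 * K') = 1/2 by rw [hεdef]; field_simp; ring]
        ring
      calc Real.exp (2 * K' * S n)
          ≤ Real.exp (2 * K' * c) * Real.log n ^ (2 * K' : ℝ) := h1
        _ ≤ Real.exp (2 * K' * c) * ((n:ℝ) ^ (1/2 : ℝ) * (ε ^ (2 * K' : ℝ))⁻¹) := by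
            rw [← h4]
            exact mul_le_mul_of_nonneg_left h3 (Real.exp_nonneg _)
        _ = Real.exp (2 * K' * c) * (ε ^ (2 * K' : ℝ))⁻¹ * (n:ℝ) ^ (1/2 : ℝ) := by ring
  obtain ⟨C, hC0, hC⟩ := hexp
  -- bound on a n for n ≥ 3
  have han : ∀ n : ℕ, 3 ≤ n → a n ≤ 1 / ((n:ℝ) * Real.log 2) := by
    intro n hn
    have hn3 : (3:ℝ) ≤ (n:ℝ) := by exact_mod_cast hn
    rw [ha n]
    apply one_div_le_one_div_of_le (by positivity)
    apply mul_le_mul_of_nonneg_left _ (by positivity)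
    calc Real.log 2 = Real.log 2 ^ (1:ℝ) := (Real.rpow_one _).symm
      _ ≤ Real.log 2 ^ p := Real.rpow_le_rpow_of_exponent_ge (by linarith) hl2'.le hp1
      _ ≤ Real.log n ^ p :=
          Real.rpow_le_rpow (by linarith) (Real.log_le_log (by norm_num) (by linarith)) hp0.le
  -- final term bound
  have hfinal : ∀ n : ℕ, 3 ≤ n →
      a n ^ 2 * S n ^ 2 * Real.exp (2 * K * S n) ≤
        (C / Real.log 2 ^ 2) * (((n:ℝ) ^ (3/2 : ℝ))⁻¹) := by
    intro n hn
    have hn3 : (3:ℝ) ≤ (n:ℝ) := by exact_mod_cast hn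
    have hnpos : (0:ℝ) < (n:ℝ) := by linarith
    have step1 : a n ^ 2 ≤ (1 / ((n:ℝ) * Real.log 2)) ^ 2 :=
      pow_le_pow_left₀ (haN n) (han n hn) 2
    have step2 : a n ^ 2 * Real.exp (2 * K' * S n) ≤
        (1 / ((n:ℝ) * Real.log 2)) ^ 2 * (C * (n:ℝ) ^ (1/2 : ℝ)) :=
      mul_le_mul step1 (hC n hn) (Real.exp_nonneg _) (by positivity)
    have hrpow : (n:ℝ) ^ (1/2 : ℝ) * (((n:ℝ) ^ 2)⁻¹) = ((n:ℝ) ^ (3/2 : ℝ))⁻¹ := by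
      rw [show ((n:ℝ) ^ (2:ℕ)) = (n:ℝ) ^ ((2:ℕ):ℝ) from (Real.rpow_natCast _ 2).symm,
        ← Real.rpow_neg hnpos.le, ← Real.rpow_add hnpos, ← Real.rpow_neg hnpos.le]
      norm_num
    have heq : (1 / ((n:ℝ) * Real.log 2)) ^ 2 * (C * (n:ℝ) ^ (1/2 : ℝ))
        = (C / Real.log 2 ^ 2) * ((n:ℝ) ^ (1/2 : ℝ) * (((n:ℝ) ^ 2)⁻¹)) := by
      have e1 : (1 / ((n:ℝ) * Real.log 2)) ^ 2 = (((n:ℝ)^2)⁻¹) * ((Real.log 2 ^ 2)⁻¹) := by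
        rw [one_div, mul_inv, mul_pow, inv_pow, inv_pow]
      rw [e1, div_eq_mul_inv]; ring
    calc a n ^ 2 * S n ^ 2 * Real.exp (2 * K * S n)
        ≤ a n ^ 2 * Real.exp (2 * K' * S n) := hTle n
      _ ≤ (1 / ((n:ℝ) * Real.log 2)) ^ 2 * (C * (n:ℝ) ^ (1/2 : ℝ)) := step2
      _ = (C / Real.log 2 ^ 2) * ((n:ℝ) ^ (1/2 : ℝ) * (((n:ℝ) ^ 2)⁻¹)) := heq
      _ = (C / Real.log 2 ^ 2) * (((n:ℝ) ^ (3/2 : ℝ))⁻¹) := by rw [hrpow]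
  -- conclude summability
  rw [← summable_nat_add_iff 3]
  have hsum : Summable (fun n : ℕ => (C / Real.log 2 ^ 2) * (((n:ℝ) ^ (3/2 : ℝ))⁻¹)) :=
    (Real.summable_nat_rpow_inv.mpr (by norm_num)).mul_left _
  apply Summable.of_nonneg_of_le (fun n => by positivity)
    (fun n => hfinal (n + 3) (by omega))
  exact (summable_nat_add_iff 3).mpr hsum

/-- Partial-sum bounds and a summability result for the step sizes
`a(n) = 1/(n (log n)^p)`, `0 < p ≤ 1`. -/
theorem stmt_6 (p : ℝ) (hp0 : 0 < p) (hp1 : p ≤ 1)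
    (a : ℕ → ℝ) (ha : ∀ n, a n = 1 / ((n : ℝ) * Real.log n ^ p)) :
    (p < 1 → ∀ n : ℕ, 2 ≤ n →
      ∑ i ∈ Finset.Ico 2 n, a i ≤ (1 / (1 - p)) * Real.log n ^ (1 - p))
    ∧ (p = 1 → ∃ c : ℝ, ∀ n : ℕ, 3 ≤ n →
      ∑ i ∈ Finset.Ico 2 n, a i ≤ Real.log (Real.log n) + c)
    ∧ ∀ Ktilde : ℝ, 0 < Ktilde →
      Summable (fun n : ℕ => a n ^ 2 * (∑ i ∈ Finset.Ico 2 n, a i) ^ 2 *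
        Real.exp (2 * Ktilde * ∑ i ∈ Finset.Ico 2 n, a i)) := by
  refine ⟨fun hplt => aux_sumB p hp0 hplt a ha, fun hpeq => ?_, fun K hK => aux_summable p hp0 hp1 a ha K hK⟩
  have ha' : ∀ n, a n = 1 / ((n : ℝ) * Real.log n) := by
    intro n; rw [ha n, hpeq, Real.rpow_one]
  exact ⟨a 2 - Real.log (Real.log 2), aux_sumC a ha'⟩
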